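/- Let f : ℝ → ℝ be strictly increasing, let p be an integer, r a real number, and suppose f(-p) ≤ r and there exists a real m* > 0 with f(-(p - m*)) = r. Define m = max(1, ⌈m*⌉). Then f(-(p - m)) ≥ r, and m is the least positive integer with this property whenever f(-(p-m)) > r; equivalently, p - m is the greatest integer z < p with f(-z) ≥ r in the strict case. -/
import Mathlib


/-- Lemma 2: with `f (-p) ≤ r`, `m* > 0` solving `f (-(p - m*)) = r` and
`m = max {1, ⌈m*⌉}`, the update satisfies `f (-(p - m)) ≥ r`; moreover, in the strict
case, `m` is the least positive integer `k` with `f (-(p - k)) > r` (equivalently,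
`p - m` is the greatest integer `z < p` with `f (-z) > r`). -/
theorem stmt_1 (f : ℝ → ℝ) (hf : StrictMono f) (p : ℤ) (r : ℝ)
    (hle : f (-(p : ℝ)) ≤ r) (mstar : ℝ) (hpos : 0 < mstar)
    (heq : f (-((p : ℝ) - mstar)) = r) (m : ℤ) (hm : m = max 1 ⌈mstar⌉) :
    r ≤ f (-((p : ℝ) - (m : ℝ))) ∧
    (r < f (-((p : ℝ) - (m : ℝ))) →
      ∀ k : ℤ, 0 < k → r < f (-((p : ℝ) - (k : ℝ))) → m ≤ k) := by
  have hmstar_le : mstar ≤ (m : ℝ) := by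
    have : (⌈mstar⌉ : ℤ) ≤ m := by simp [hm]
    calc mstar ≤ (⌈mstar⌉ : ℝ) := Int.le_ceil mstar
      _ ≤ (m : ℝ) := by exact_mod_cast this
  constructor
  · rw [← heq]
    exact hf.monotone (by linarith)
  · intro _ k hk hkgt
    have hmk : mstar < (k : ℝ) := by
      have := hf.lt_iff_lt.mp (heq ▸ hkgt)
      linarith
    rw [hm]
    refine max_le hk ?_
    exact Int.ceil_le.mpr (by exact_mod_cast hmk.le)
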